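/- For all integers m ≥ 0, r ≥ 1, and n ≥ 1, the recurrence r · S_m^{(r+1)}(n) = (n+r) · S_m^{(r)}(n) − S_{m+1}^{(r)}(n) holds. -/
import Mathlib


/-- Hyper-sum of powers of integers: `S m 0 n = n^m` and
`S m (r+1) n = ∑ i in [1..n], S m r i`. -/
def S (m : ℕ) : ℕ → ℕ → ℚ
  | 0, n => (n : ℚ) ^ m
  | r + 1, n => ∑ i ∈ Finset.Icc 1 n, S m r i

lemma swap_sum (f : ℕ → ℚ) (n : ℕ) :
    ∑ i ∈ Finset.Icc 1 n, ∑ j ∈ Finset.Icc 1 i, f j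
      = ∑ j ∈ Finset.Icc 1 n, (((n : ℚ) + 1 - j) * f j) := by
  induction n with
  | zero => simp
  | succ n ih =>
    have hle : 1 ≤ n + 1 := Nat.succ_le_succ (Nat.zero_le n)
    rw [Finset.sum_Icc_succ_top hle, Finset.sum_Icc_succ_top hle,
        Finset.sum_Icc_succ_top hle, ih]
    have h1 : ∀ j ∈ Finset.Icc 1 n, (((n + 1 : ℕ) : ℚ) + 1 - j) * f j
        = ((n : ℚ) + 1 - j) * f j + f j := by intro j hj; push_cast; ring
    rw [Finset.sum_congr rfl h1, Finset.sum_add_distrib]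
    push_cast
    ring

lemma key (m : ℕ) : ∀ r n : ℕ,
    ((r : ℚ) + 1) * S m (r + 1 + 1) n
      = ((n : ℚ) + r + 1) * S m (r + 1) n - S (m + 1) (r + 1) n := by
  intro r
  induction r with
  | zero =>
    intro n
    have h2 : S m (0 + 1 + 1) n = ∑ i ∈ Finset.Icc 1 n, ∑ j ∈ Finset.Icc 1 i, (j : ℚ) ^ m := rfl
    have h1 : S m (0 + 1) n = ∑ j ∈ Finset.Icc 1 n, (j : ℚ) ^ m := rfl
    have h1' : S (m + 1) (0 + 1) n = ∑ j ∈ Finset.Icc 1 n, (j : ℚ) ^ (m + 1) := rfl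
    rw [h2, h1, h1', swap_sum]
    rw [Finset.mul_sum, Finset.mul_sum, ← Finset.sum_sub_distrib]
    apply Finset.sum_congr rfl
    intro j hj
    push_cast
    ring
  | succ r ih =>
    intro n
    have hA : S m (r + 1 + 1 + 1) n = ∑ i ∈ Finset.Icc 1 n, S m (r + 1 + 1) i := rfl
    have hB : S m (r + 1 + 1) n = ∑ i ∈ Finset.Icc 1 n, S m (r + 1) i := rfl
    have hC : S (m + 1) (r + 1 + 1) n = ∑ i ∈ Finset.Icc 1 n, S (m + 1) (r + 1) i := rfl
    have e1 : ((r : ℚ) + 1) * ∑ i ∈ Finset.Icc 1 n, S m (r + 1 + 1) i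
        = (∑ i ∈ Finset.Icc 1 n, ((i : ℚ) * S m (r + 1) i))
          + ((r : ℚ) + 1) * (∑ i ∈ Finset.Icc 1 n, S m (r + 1) i)
          - ∑ i ∈ Finset.Icc 1 n, S (m + 1) (r + 1) i := by
      rw [Finset.mul_sum, Finset.mul_sum, ← Finset.sum_add_distrib, ← Finset.sum_sub_distrib]
      apply Finset.sum_congr rfl
      intro i hi
      have h := ih i
      linarith [h]
    have e2 : ∑ i ∈ Finset.Icc 1 n, S m (r + 1 + 1) i
        = ∑ j ∈ Finset.Icc 1 n, (((n : ℚ) + 1 - j) * S m (r + 1) j) :=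
      swap_sum (S m (r + 1)) n
    have e2' : ∑ i ∈ Finset.Icc 1 n, S m (r + 1 + 1) i
        = ((n : ℚ) + 1) * (∑ i ∈ Finset.Icc 1 n, S m (r + 1) i)
          - ∑ i ∈ Finset.Icc 1 n, ((i : ℚ) * S m (r + 1) i) := by
      rw [e2, Finset.mul_sum, ← Finset.sum_sub_distrib]
      exact Finset.sum_congr rfl fun j hj => by ring
    rw [hA, hB, hC]
    push_cast
    linear_combination e1 + e2'

theorem stmt_2 (m r n : ℕ) (hr : 1 ≤ r) (hn : 1 ≤ n) :
    (r : ℚ) * S m (r + 1) n = ((n : ℚ) + r) * S m r n - S (m + 1) r n := by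
  obtain ⟨r, rfl⟩ := Nat.exists_eq_add_of_le' hr
  have h := key m r n
  push_cast
  push_cast at h
  linear_combination h
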